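/- Let ψ : 𝒫(A) → 𝒫(A) be monotone, μ = lfp(ψ), and φ(S) = (A \ μ) ∪ ψ(S ∩ μ). Then for every nonzero ordinal γ: φ^(γ+1)(∅) ⊆ φ^γ(∅) holds if and only if ψ^(γ+1)(∅) ⊆ ψ^γ(∅). Hence if ψ converges to its least fixed point in exactly α steps for some ordinal α > 0 (i.e., ψ^α(∅) = ψ^(α+1)(∅) and ψ^β(∅) ⊊ ψ^(β+1)(∅) for all β < α), then so does φ, and moreover lfp(φ) = A. -/

import Mathlib

open Set

universe u v
/-- Ordinal-indexed iterates of a map on a powerset, starting from ∅,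
taking unions at limit stages. -/
noncomputable def iter {A : Type u} (f : Set A → Set A) (o : Ordinal.{v}) : Set A :=
  Ordinal.limitRecOn o ∅ (fun _ ih => f ih)
    (fun o _ ih => ⋃ (b : Ordinal.{v}) (h : b < o), ih b h)

theorem iter_zero {A : Type u} (f : Set A → Set A) : iter f (0 : Ordinal.{v}) = ∅ :=
  Ordinal.limitRecOn_zero ..

theorem iter_succ {A : Type u} (f : Set A → Set A) (o : Ordinal.{v}) :
    iter f (o + 1) = f (iter f o) :=
  Ordinal.limitRecOn_succ ..

theorem iter_succ' {A : Type u} (f : Set A → Set A) (o : Ordinal.{v}) :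
    iter f (Order.succ o) = f (iter f o) := by
  rw [Order.succ_eq_add_one]; exact iter_succ f o

theorem iter_limit {A : Type u} (f : Set A → Set A) {o : Ordinal.{v}} (h : Order.IsSuccLimit o) :
    iter f o = ⋃ (b : Ordinal.{v}) (_ : b < o), iter f b :=
  Ordinal.limitRecOn_limit _ _ _ _ h

theorem stmt13 {A : Type u} (ψ : Set A → Set A) (hψ : Monotone ψ)
    (μ : Set A) (hμ : μ = ⋂₀ {S : Set A | ψ S ⊆ S})
    (φ : Set A → Set A) (hφ : ∀ S, φ S = μᶜ ∪ ψ (S ∩ μ)) :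
    (∀ γ : Ordinal.{v}, γ ≠ 0 →
        (iter φ (γ + 1) ⊆ iter φ γ ↔ iter ψ (γ + 1) ⊆ iter ψ γ)) ∧
      (∀ α : Ordinal.{v}, 0 < α →
        iter ψ α = iter ψ (α + 1) → (∀ β < α, iter ψ β ⊂ iter ψ (β + 1)) →
          (iter φ α = iter φ (α + 1) ∧ (∀ β < α, iter φ β ⊂ iter φ (β + 1)) ∧
            ⋂₀ {S : Set A | φ S ⊆ S} = Set.univ)) := by
  -- μ is a prefixed point of ψ
  have hpre : ψ μ ⊆ μ := by
    have h : ∀ S ∈ {S : Set A | ψ S ⊆ S}, ψ μ ⊆ S := by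
      intro S hS
      have hμS : μ ⊆ S := hμ ▸ sInter_subset_of_mem hS
      exact (hψ hμS).trans hS
    conv_rhs => rw [hμ]
    exact subset_sInter h
  -- iter ψ γ ⊆ μ for all γ
  have hsub : ∀ γ : Ordinal.{v}, iter ψ γ ⊆ μ := by
    intro γ
    induction γ using Ordinal.limitRecOn with
    | zero => rw [iter_zero]; exact empty_subset μ
    | add_one o ih => rw [iter_succ]; exact (hψ ih).trans hpre
    | limit o ho ih =>
      rw [iter_limit ψ ho]
      exact iUnion₂_subset ih
  -- key fact: iter φ γ = μᶜ ∪ iter ψ γ for γ ≥ 1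
  have key : ∀ γ : Ordinal.{v}, γ ≠ 0 → iter φ γ = μᶜ ∪ iter ψ γ := by
    intro γ
    induction γ using Ordinal.limitRecOn with
    | zero => intro h; exact absurd rfl h
    | add_one o ih =>
      intro _
      rcases eq_or_ne o 0 with rfl | ho
      · rw [iter_succ, iter_succ, iter_zero, iter_zero, hφ]
        simp
      · rw [iter_succ, iter_succ, hφ, ih ho]
        have h2 : (μᶜ ∪ iter ψ o) ∩ μ = iter ψ o := by
          rw [union_inter_distrib_right, compl_inter_self,
            inter_eq_left.mpr (hsub o)]
          simp
        rw [h2]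
    | limit o ho ih =>
      intro _
      rw [iter_limit φ ho, iter_limit ψ ho]
      apply Subset.antisymm
      · apply iUnion₂_subset
        intro b hb
        rcases eq_or_ne b 0 with rfl | hb0
        · rw [iter_zero]; exact empty_subset _
        · rw [ih b hb hb0]
          exact union_subset_union_right _
            (subset_iUnion₂ (s := fun b _ => iter ψ b) b hb)
      · apply union_subset
        · have h1 : (1 : Ordinal.{v}) < o := Ordinal.one_lt_of_isSuccLimit ho
          have hm : μᶜ ⊆ iter φ 1 := by
            rw [show (1 : Ordinal.{v}) = 0 + 1 from (zero_add 1).symm, iter_succ, hφ]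
            exact subset_union_left
          intro x hx
          exact mem_iUnion₂.mpr ⟨1, h1, hm hx⟩
        · apply iUnion₂_subset
          intro b hb
          rcases eq_or_ne b 0 with rfl | hb0
          · rw [iter_zero]; exact empty_subset _
          · refine subset_trans ?_ (subset_iUnion₂ (s := fun b _ => iter φ b) b hb)
            rw [ih b hb hb0]
            exact subset_union_right
  -- part 1
  have part1 : ∀ γ : Ordinal.{v}, γ ≠ 0 →
      (iter φ (γ + 1) ⊆ iter φ γ ↔ iter ψ (γ + 1) ⊆ iter ψ γ) := by
    intro γ hγ
    rw [key γ hγ, key (γ + 1) (Ordinal.succ_ne_zero γ)]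
    constructor
    · intro h x hx
      have hxμ : x ∈ μ := hsub (γ + 1) hx
      rcases h (Or.inr hx) with h' | h'
      · exact absurd hxμ h'
      · exact h'
    · intro h
      exact union_subset_union_right _ h
  refine ⟨part1, ?_⟩
  intro α hα hfix hstrict
  have hα0 : α ≠ 0 := hα.ne'
  refine ⟨?_, ?_, ?_⟩
  · rw [key α hα0, key (α + 1) (Ordinal.succ_ne_zero α), hfix]
  · intro β hβ
    rcases eq_or_ne β 0 with rfl | hβ0
    · rw [iter_zero, key (0 + 1) (Ordinal.succ_ne_zero 0)]
      refine ⟨empty_subset _, ?_⟩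
      have h01 := hstrict 0 hα
      rw [iter_zero] at h01
      obtain ⟨x, hx, -⟩ := exists_of_ssubset h01
      intro hcon
      exact (hcon (Or.inr hx)).elim
    · rw [key β hβ0, key (β + 1) (Ordinal.succ_ne_zero β)]
      have hs := hstrict β hβ
      refine ⟨union_subset_union_right _ hs.subset, ?_⟩
      intro hcon
      obtain ⟨x, hx, hnx⟩ := exists_of_ssubset hs
      have hxμ : x ∈ μ := hsub (β + 1) hx
      rcases hcon (Or.inr hx) with h' | h'
      · exact h' hxμ
      · exact hnx h'
  · -- lfp φ = univ
    apply Subset.antisymm (subset_univ _)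
    intro x _
    intro S hS
    simp only [mem_setOf_eq] at hS
    rw [hφ] at hS
    have hcS : μᶜ ⊆ S := subset_union_left.trans hS
    have hψS : ψ (S ∩ μ) ⊆ S := subset_union_right.trans hS
    have hpref : ψ (S ∩ μ) ⊆ S ∩ μ :=
      subset_inter hψS ((hψ inter_subset_right).trans hpre)
    have hμS : μ ⊆ S := by
      have h1 : μ ⊆ S ∩ μ := by
        conv_lhs => rw [hμ]
        exact sInter_subset_of_mem hpref
      exact h1.trans inter_subset_left
    rcases em (x ∈ μ) with h | h
    · exact hμS h
    · exact hcS h
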